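/- Let 0 ≤ a ≤ b, τ ≥ 0, ν > 0, and let g, g⁻: ℝ → [0,∞) be locally integrable with g⁻(t) ≤ ν for almost every t ∈ [a+τ, b+τ]. Define q(t) := ∫₀ᵗ g dσ − ∫₀^{t+τ} g⁻ dσ. If q(a) ≥ 0, then q(t) ≥ ∫ₐᵗ g dσ − ν·(t − a) for all t ∈ [a, b]. In particular, if g(t) ≥ ν + φ(t) for almost every t ∈ [a,b] with φ ≥ 0 locally integrable, then q(t) ≥ ∫ₐᵗ φ dσ for all t ∈ [a,b]. -/

import Mathlib

open MeasureTheory Set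

lemma icc_split (f : ℝ → ℝ) (hf : LocallyIntegrable f) {x y z : ℝ}
    (hxy : x ≤ y) (hyz : y ≤ z) :
    (∫ s in Icc x z, f s) = (∫ s in Icc x y, f s) + ∫ s in Icc y z, f s := by
  rw [integral_Icc_eq_integral_Ioc, integral_Icc_eq_integral_Ioc,
    integral_Icc_eq_integral_Ioc, ← Ioc_union_Ioc_eq_Ioc hxy hyz,
    setIntegral_union (Ioc_disjoint_Ioc_of_le le_rfl) measurableSet_Ioc
      ((hf.integrableOn_isCompact isCompact_Icc).mono_set (Ioc_subset_Icc_self (a := x) (b := y)))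
      ((hf.integrableOn_isCompact isCompact_Icc).mono_set (Ioc_subset_Icc_self (a := y) (b := z)))]

/-!
STATEMENT 14 (general form of Claims `travarc a,b`):
Let `0 ≤ a ≤ b`, `τ ≥ 0`, `ν > 0`, and let `g, g⁻ ≥ 0` be locally integrable with
`g⁻ ≤ ν` a.e. on `[a+τ, b+τ]`. Set `q(t) := ∫₀ᵗ g − ∫₀^{t+τ} g⁻` (the Vickrey
queue). If `q(a) ≥ 0`, then `q(t) ≥ ∫ₐᵗ g − ν·(t−a)` on `[a,b]`; in particular,
if `g ≥ ν + φ` a.e. on `[a,b]` for some `φ ≥ 0` locally integrable, then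
`q(t) ≥ ∫ₐᵗ φ` on `[a,b]`.
-/
theorem vickrey_queue_lower_bound
    (a b τ ν : ℝ) (ha : 0 ≤ a) (hab : a ≤ b) (hτ : 0 ≤ τ) (hν : 0 < ν)
    (g gm : ℝ → ℝ) (hg0 : ∀ t, 0 ≤ g t) (hgm0 : ∀ t, 0 ≤ gm t)
    (hgloc : LocallyIntegrable g) (hgmloc : LocallyIntegrable gm)
    (hgmb : ∀ᵐ t, t ∈ Icc (a + τ) (b + τ) → gm t ≤ ν)
    (hqa : 0 ≤ (∫ s in Icc (0:ℝ) a, g s) - ∫ s in Icc (0:ℝ) (a + τ), gm s) :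
    (∀ t ∈ Icc a b,
      (∫ s in Icc a t, g s) - ν * (t - a) ≤
        (∫ s in Icc (0:ℝ) t, g s) - ∫ s in Icc (0:ℝ) (t + τ), gm s) ∧
    ∀ φ : ℝ → ℝ, (∀ t, 0 ≤ φ t) → LocallyIntegrable φ →
      (∀ᵐ t, t ∈ Icc a b → ν + φ t ≤ g t) →
      ∀ t ∈ Icc a b,
        (∫ s in Icc a t, φ s) ≤
          (∫ s in Icc (0:ℝ) t, g s) - ∫ s in Icc (0:ℝ) (t + τ), gm s := by
  have main : ∀ t ∈ Icc a b,
      (∫ s in Icc a t, g s) - ν * (t - a) ≤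
        (∫ s in Icc (0:ℝ) t, g s) - ∫ s in Icc (0:ℝ) (t + τ), gm s := by
    intro t ht
    obtain ⟨hat, htb⟩ := ht
    have hsplitg := icc_split g hgloc ha hat
    have hsplitgm := icc_split gm hgmloc (by linarith : (0:ℝ) ≤ a + τ)
      (by linarith : a + τ ≤ t + τ)
    have hbound : (∫ s in Icc (a + τ) (t + τ), gm s) ≤ ν * (t - a) := by
      have h1 : (∫ s in Icc (a + τ) (t + τ), gm s) ≤
          ∫ _ in Icc (a + τ) (t + τ), ν := by
        apply setIntegral_mono_ae_restrict
        · exact (hgmloc.integrableOn_isCompact isCompact_Icc)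
        · exact integrableOn_const measure_Icc_lt_top.ne
        · filter_upwards [ae_restrict_mem measurableSet_Icc,
            (ae_restrict_iff' measurableSet_Icc).2
              (hgmb.mono (fun s hs hmem => hs (Icc_subset_Icc le_rfl (by linarith) hmem)))]
            with s hmem hb
          exact hb
      have h2 : (∫ _ in Icc (a + τ) (t + τ), ν) = ν * (t - a) := by
        rw [setIntegral_const, Real.volume_real_Icc_of_le (by linarith), smul_eq_mul]
        ring
      linarith
    linarith
  refine ⟨main, ?_⟩
  intro φ hφ0 hφloc hφg t ht
  obtain ⟨hat, htb⟩ := ht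
  have key : (∫ s in Icc a t, φ s) + ν * (t - a) ≤ ∫ s in Icc a t, g s := by
    have h1 : (∫ s in Icc a t, (ν + φ s)) ≤ ∫ s in Icc a t, g s := by
      apply setIntegral_mono_ae_restrict
      · exact (integrableOn_const (s := Icc a t) (μ := volume) (C := ν) measure_Icc_lt_top.ne).add
          (hφloc.integrableOn_isCompact isCompact_Icc)
      · exact hgloc.integrableOn_isCompact isCompact_Icc
      · filter_upwards [ae_restrict_mem measurableSet_Icc,
          (ae_restrict_iff' measurableSet_Icc).2
            (hφg.mono (fun s hs hmem => hs (Icc_subset_Icc le_rfl htb hmem)))]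
          with s hmem hb
        exact hb
    have h2 : (∫ s in Icc a t, (ν + φ s)) = ν * (t - a) + ∫ s in Icc a t, φ s := by
      rw [integral_add (integrableOn_const (s := Icc a t) (μ := volume) (C := ν) measure_Icc_lt_top.ne)
        (hφloc.integrableOn_isCompact isCompact_Icc), setIntegral_const,
        Real.volume_real_Icc_of_le hat, smul_eq_mul]
      ring
    linarith
  have := main t ⟨hat, htb⟩
  linarith
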